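/- Let (Ω, 𝓕, P) be a probability space, d ≥ 1, δ > 0, μ a finite nonnegative Borel measure on [0,δ], p ≥ 1 a real number, K₁, K₂ ≥ 0 and ε ∈ (0,1]. Let X : ℝ × Ω → ℝ^d be jointly measurable with E[‖X(t,·)‖^p] < ∞ for every t and E[‖X(t,·) − X(s,·)‖^p] ≤ K₁|t−s|^p + K₂ ε^p |t−s|^{p/2} for all s, t ∈ ℝ. Then for every t ∈ ℝ and every integer n ≥ 1, E[‖∫₀^δ X(t−u,·) μ(du) − ∫₀^δ X(t−g_n(u),·) μ(du)‖^p] ≤ μ([0,δ])^p (K₁ n^{−p} + K₂ ε^p n^{−p/2}); in particular the discretization error E[|H(X_{t−·}) − H_n(X_{t−·})|^p] is O(n^{−p}) + O(ε^p n^{−p/2}). -/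

import Mathlib

open MeasureTheory Set
open scoped ENNReal NNReal

/-- Jensen/Hölder: `(∫⁻ f)^p ≤ ν(univ)^(p-1) * ∫⁻ f^p` for `p ≥ 1` on a finite measure. -/
private lemma aux_jensen {α : Type*} [MeasurableSpace α] (ν : Measure α) [IsFiniteMeasure ν]
    {p : ℝ} (hp : 1 ≤ p) {f : α → ℝ≥0∞} (hf : AEMeasurable f ν) :
    (∫⁻ x, f x ∂ν) ^ p ≤ ν Set.univ ^ (p - 1) * ∫⁻ x, f x ^ p ∂ν := by
  rcases eq_or_lt_of_le hp with h1 | h1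
  · simp [← h1]
  · have hp0 : (0:ℝ) < p := by linarith
    set q := Real.conjExponent p with hq
    have hpq : p.HolderConjugate q := Real.HolderConjugate.conjExponent h1
    have h0 : (∫⁻ x, f x ∂ν) ≤ (∫⁻ x, f x ^ p ∂ν) ^ (1/p) * (ν Set.univ) ^ (1/q) := by
      have h := ENNReal.lintegral_mul_le_Lp_mul_Lq ν hpq hf
        (aemeasurable_const (b := (1:ℝ≥0∞)))
      simpa using h
    have hqp : 1/q * p = p - 1 := by
      have h := hpq.inv_add_inv_eq_one
      have hpne : p ≠ 0 := ne_of_gt hp0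
      field_simp at h ⊢
      nlinarith [h]
    calc (∫⁻ x, f x ∂ν) ^ p
        ≤ ((∫⁻ x, f x ^ p ∂ν) ^ (1/p) * (ν Set.univ) ^ (1/q)) ^ p :=
          ENNReal.rpow_le_rpow h0 (le_of_lt hp0)
      _ = ν Set.univ ^ (p - 1) * ∫⁻ x, f x ^ p ∂ν := by
          rw [ENNReal.mul_rpow_of_nonneg _ _ (le_of_lt hp0), ← ENNReal.rpow_mul,
            ← ENNReal.rpow_mul, one_div_mul_cancel (ne_of_gt hp0), ENNReal.rpow_one, hqp,
            mul_comm]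

set_option maxHeartbeats 1000000 in
/-- Discretization error of the delay functional (the paper's Lemma 4 with explicit
constants): under the moment-increment assumption (A2),
`E[‖H(X_{t-·}) - H_n(X_{t-·})‖^p] ≤ μ([0,δ])^p (K₁ n^{-p} + K₂ ε^p n^{-p/2})`,
where `H_n` samples the path at the grid `g_n(u) = min(⌊nu⌋/n, ⌊nδ⌋/n)`. -/
theorem delay_discretization_error
    (Ω : Type*) [MeasurableSpace Ω] (P : Measure Ω) [IsProbabilityMeasure P]
    (d : ℕ) (hd : 1 ≤ d) (δ : ℝ) (hδ : 0 < δ)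
    (μ : Measure ℝ) [IsFiniteMeasure μ]
    (p : ℝ) (hp : 1 ≤ p)
    (K₁ K₂ : ℝ) (hK₁ : 0 ≤ K₁) (hK₂ : 0 ≤ K₂)
    (ε : ℝ) (hε : 0 < ε) (hε1 : ε ≤ 1)
    (X : ℝ → Ω → EuclideanSpace ℝ (Fin d))
    (hXm : Measurable (fun q : ℝ × Ω => X q.1 q.2))
    (hmom : ∀ t : ℝ, (∫⁻ ω, (‖X t ω‖₊ : ℝ≥0∞) ^ p ∂P) < ⊤)
    (hinc : ∀ s t : ℝ, (∫⁻ ω, (‖X t ω - X s ω‖₊ : ℝ≥0∞) ^ p ∂P)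
        ≤ ENNReal.ofReal (K₁ * |t - s| ^ p + K₂ * ε ^ p * |t - s| ^ (p / 2)))
    (t : ℝ) (n : ℕ) (hn : 1 ≤ n) :
    (∫⁻ ω, (‖(∫ u in Icc (0:ℝ) δ, X (t - u) ω ∂μ)
          - ∫ u in Icc (0:ℝ) δ,
              X (t - min ((⌊(n:ℝ) * u⌋₊ : ℝ) / n) ((⌊(n:ℝ) * δ⌋₊ : ℝ) / n)) ω ∂μ‖₊
          : ℝ≥0∞) ^ p ∂P)
      ≤ ENNReal.ofReal ((μ (Icc (0:ℝ) δ)).toReal ^ p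
          * (K₁ * (n:ℝ) ^ (-p) + K₂ * ε ^ p * (n:ℝ) ^ (-(p / 2)))) := by
  have hp0 : (0:ℝ) < p := by linarith
  have hn0 : (0:ℝ) < (n:ℝ) := by exact_mod_cast hn
  set s : Set ℝ := Icc (0:ℝ) δ with hs
  set g : ℝ → ℝ := fun u => min ((⌊(n:ℝ) * u⌋₊ : ℝ) / n) ((⌊(n:ℝ) * δ⌋₊ : ℝ) / n) with hgdef
  have hg_meas : Measurable g := by
    apply Measurable.min
    · exact (measurable_from_nat.comp (Nat.measurable_floor.comp
        (measurable_const_mul _))).div_const _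
    · exact measurable_const
  -- grid bounds
  have hgu : ∀ u ∈ s, 0 ≤ u - g u ∧ u - g u ≤ 1 / n := by
    intro u hu
    obtain ⟨hu0, huδ⟩ := hu
    have hmin : g u = (⌊(n:ℝ) * u⌋₊ : ℝ) / n := by
      apply min_eq_left
      have h1 : ⌊(n:ℝ) * u⌋₊ ≤ ⌊(n:ℝ) * δ⌋₊ := Nat.floor_mono (by nlinarith)
      have h2 : ((⌊(n:ℝ) * u⌋₊ : ℕ) : ℝ) ≤ ((⌊(n:ℝ) * δ⌋₊ : ℕ) : ℝ) := by exact_mod_cast h1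
      exact div_le_div_of_nonneg_right h2 hn0.le
    constructor
    · rw [hmin]
      have h3 : (⌊(n:ℝ) * u⌋₊ : ℝ) ≤ (n:ℝ) * u := Nat.floor_le (by positivity)
      rw [sub_nonneg, div_le_iff₀ hn0]
      linarith
    · rw [hmin]
      have h3 : (n:ℝ) * u < (⌊(n:ℝ) * u⌋₊ : ℝ) + 1 := Nat.lt_floor_add_one _
      rw [sub_le_iff_le_add, ← add_div, le_div_iff₀ hn0]
      linarith
  -- measurability
  have hX1 : Measurable (fun q : ℝ × Ω => X (t - q.1) q.2) :=
    hXm.comp ((measurable_const.sub measurable_fst).prodMk measurable_snd)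
  have hX2 : Measurable (fun q : ℝ × Ω => X (t - g q.1) q.2) :=
    hXm.comp ((measurable_const.sub (hg_meas.comp measurable_fst)).prodMk measurable_snd)
  set h : ℝ → Ω → ℝ≥0∞ := fun u ω => (‖X (t - u) ω - X (t - g u) ω‖₊ : ℝ≥0∞) with hhdef
  have hsub : Measurable (fun q : ℝ × Ω => X (t - q.1) q.2 - X (t - g q.1) q.2) :=
    hX1.sub hX2
  have hh_meas : Measurable (fun q : ℝ × Ω => h q.1 q.2) := hsub.enorm
  have hh_u : ∀ ω : Ω, Measurable (fun u => h u ω) := by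
    intro ω
    have h1 : Measurable (fun u : ℝ => X (t - u) ω - X (t - g u) ω) :=
      hsub.comp (measurable_id.prodMk measurable_const)
    exact h1.enorm
  -- Step A: pointwise bound on the norm of the difference of Bochner integrals
  have hA : ∀ ω : Ω, (‖(∫ u in s, X (t - u) ω ∂μ) - ∫ u in s, X (t - g u) ω ∂μ‖₊ : ℝ≥0∞)
      ≤ ∫⁻ u in s, h u ω ∂μ := by
    intro ω
    have hm1 : Measurable (fun u : ℝ => X (t - u) ω) :=
      hX1.comp (measurable_id.prodMk measurable_const)
    have hm2 : Measurable (fun u : ℝ => X (t - g u) ω) := by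
      have heq : (fun u : ℝ => X (t - g u) ω)
          = (fun q : ℝ × Ω => X (t - g q.1) q.2) ∘ (fun u : ℝ => (u, ω)) := rfl
      rw [heq]
      exact hX2.comp (measurable_id.prodMk measurable_const)
    by_cases hE : (∫⁻ u in s, h u ω ∂μ) = ⊤
    · rw [hE]; exact le_top
    · have hE' : (∫⁻ u in s, h u ω ∂μ) < ⊤ := lt_top_iff_ne_top.mpr hE
      by_cases h1 : (∫⁻ u in s, (‖X (t - u) ω‖₊ : ℝ≥0∞) ∂μ) < ⊤
      · have h2 : (∫⁻ u in s, (‖X (t - g u) ω‖₊ : ℝ≥0∞) ∂μ) < ⊤ := by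
          have hb : ∀ u : ℝ, (‖X (t - g u) ω‖₊ : ℝ≥0∞)
              ≤ (‖X (t - u) ω‖₊ : ℝ≥0∞) + h u ω := by
            intro u
            have hnn : ‖X (t - g u) ω‖₊
                ≤ ‖X (t - u) ω‖₊ + ‖X (t - u) ω - X (t - g u) ω‖₊ := by
              calc ‖X (t - g u) ω‖₊
                  = ‖X (t - u) ω - (X (t - u) ω - X (t - g u) ω)‖₊ := by
                    congr 1; abel
                _ ≤ _ := nnnorm_sub_le _ _
            show (‖X (t - g u) ω‖₊ : ℝ≥0∞)
                ≤ (‖X (t - u) ω‖₊ : ℝ≥0∞) + (‖X (t - u) ω - X (t - g u) ω‖₊ : ℝ≥0∞)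
            exact_mod_cast hnn
          calc (∫⁻ u in s, (‖X (t - g u) ω‖₊ : ℝ≥0∞) ∂μ)
              ≤ ∫⁻ u in s, ((‖X (t - u) ω‖₊ : ℝ≥0∞) + h u ω) ∂μ := lintegral_mono hb
            _ = (∫⁻ u in s, (‖X (t - u) ω‖₊ : ℝ≥0∞) ∂μ) + ∫⁻ u in s, h u ω ∂μ :=
                lintegral_add_left hm1.enorm _
            _ < ⊤ := ENNReal.add_lt_top.mpr ⟨h1, hE'⟩
        have hi1 : Integrable (fun u : ℝ => X (t - u) ω) (μ.restrict s) :=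
          ⟨hm1.aestronglyMeasurable, h1⟩
        have hi2 : Integrable (fun u : ℝ => X (t - g u) ω) (μ.restrict s) :=
          ⟨hm2.aestronglyMeasurable, h2⟩
        rw [← integral_sub hi1 hi2]
        exact enorm_integral_le_lintegral_enorm _
      · have h1' : (∫⁻ u in s, (‖X (t - u) ω‖₊ : ℝ≥0∞) ∂μ) = ⊤ := by
          simpa [lt_top_iff_ne_top, not_not] using h1
        have h2' : (∫⁻ u in s, (‖X (t - g u) ω‖₊ : ℝ≥0∞) ∂μ) = ⊤ := by
          by_contra h2
          have h2lt : (∫⁻ u in s, (‖X (t - g u) ω‖₊ : ℝ≥0∞) ∂μ) < ⊤ :=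
            lt_top_iff_ne_top.mpr h2
          have hb : ∀ u : ℝ, (‖X (t - u) ω‖₊ : ℝ≥0∞)
              ≤ h u ω + (‖X (t - g u) ω‖₊ : ℝ≥0∞) := by
            intro u
            have hnn : ‖X (t - u) ω‖₊
                ≤ ‖X (t - u) ω - X (t - g u) ω‖₊ + ‖X (t - g u) ω‖₊ := by
              calc ‖X (t - u) ω‖₊
                  = ‖(X (t - u) ω - X (t - g u) ω) + X (t - g u) ω‖₊ := by
                    congr 1; abel
                _ ≤ _ := nnnorm_add_le _ _
            show (‖X (t - u) ω‖₊ : ℝ≥0∞)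
                ≤ (‖X (t - u) ω - X (t - g u) ω‖₊ : ℝ≥0∞) + (‖X (t - g u) ω‖₊ : ℝ≥0∞)
            exact_mod_cast hnn
          have hle : (∫⁻ u in s, (‖X (t - u) ω‖₊ : ℝ≥0∞) ∂μ)
              ≤ (∫⁻ u in s, h u ω ∂μ) + ∫⁻ u in s, (‖X (t - g u) ω‖₊ : ℝ≥0∞) ∂μ :=
            le_trans (lintegral_mono hb) (le_of_eq (lintegral_add_left (hh_u ω) _))
          rw [h1'] at hle
          exact absurd (lt_of_le_of_lt hle (ENNReal.add_lt_top.mpr ⟨hE', h2lt⟩))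
            (lt_irrefl ⊤)
        have hni1 : ¬ Integrable (fun u : ℝ => X (t - u) ω) (μ.restrict s) := by
          intro hInt
          exact absurd hInt.2 (by rw [HasFiniteIntegral]; change ¬ (∫⁻ u in s, (‖X (t - u) ω‖₊ : ℝ≥0∞) ∂μ) < ⊤; rw [h1']; exact lt_irrefl _)
        have hni2 : ¬ Integrable (fun u : ℝ => X (t - g u) ω) (μ.restrict s) := by
          intro hInt
          exact absurd hInt.2 (by rw [HasFiniteIntegral]; change ¬ (∫⁻ u in s, (‖X (t - g u) ω‖₊ : ℝ≥0∞) ∂μ) < ⊤; rw [h2']; exact lt_irrefl _)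
        rw [integral_undef hni1, integral_undef hni2, sub_zero]
        simp
  -- the uniform increment bound
  set C : ℝ≥0∞ := ENNReal.ofReal (K₁ * (n:ℝ) ^ (-p) + K₂ * ε ^ p * (n:ℝ) ^ (-(p / 2))) with hC
  have hCbound : ∀ u ∈ s, (∫⁻ ω, (h u ω) ^ p ∂P) ≤ C := by
    intro u hu
    obtain ⟨hd0, hd1⟩ := hgu u hu
    have e1 : ((1:ℝ) / n) ^ p = (n:ℝ) ^ (-p) := by
      rw [Real.rpow_neg hn0.le, ← Real.inv_rpow hn0.le, one_div]
    have e2 : ((1:ℝ) / n) ^ (p / 2) = (n:ℝ) ^ (-(p / 2)) := by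
      rw [Real.rpow_neg hn0.le, ← Real.inv_rpow hn0.le, one_div]
    have hb1 : (u - g u) ^ p ≤ (n:ℝ) ^ (-p) := by
      rw [← e1]; exact Real.rpow_le_rpow hd0 hd1 hp0.le
    have hb2 : (u - g u) ^ (p / 2) ≤ (n:ℝ) ^ (-(p / 2)) := by
      rw [← e2]; exact Real.rpow_le_rpow hd0 hd1 (by linarith)
    have habs : |(t - g u) - (t - u)| = u - g u := by
      rw [show (t - g u) - (t - u) = u - g u by ring, abs_of_nonneg hd0]
    calc (∫⁻ ω, (h u ω) ^ p ∂P)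
        = ∫⁻ ω, (‖X (t - g u) ω - X (t - u) ω‖₊ : ℝ≥0∞) ^ p ∂P := by
          apply lintegral_congr
          intro ω
          show ((‖X (t - u) ω - X (t - g u) ω‖₊ : ℝ≥0∞)) ^ p
              = ((‖X (t - g u) ω - X (t - u) ω‖₊ : ℝ≥0∞)) ^ p
          rw [← nnnorm_neg, neg_sub]
      _ ≤ ENNReal.ofReal (K₁ * |(t - g u) - (t - u)| ^ p
            + K₂ * ε ^ p * |(t - g u) - (t - u)| ^ (p / 2)) := hinc (t - u) (t - g u)
      _ ≤ C := by
          rw [hC]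
          apply ENNReal.ofReal_le_ofReal
          rw [habs]
          have hεp : 0 ≤ ε ^ p := Real.rpow_nonneg hε.le p
          nlinarith [mul_le_mul_of_nonneg_left hb1 hK₁,
            mul_le_mul_of_nonneg_left hb2 (mul_nonneg hK₂ hεp)]
  have hCne : C ≠ ⊤ := ENNReal.ofReal_ne_top
  -- main chain
  have hmu_ne : μ s ≠ ⊤ := measure_ne_top μ s
  have hfin : IsFiniteMeasure (μ.restrict s) := inferInstance
  have hchain : (∫⁻ ω, (‖(∫ u in s, X (t - u) ω ∂μ)
        - ∫ u in s, X (t - g u) ω ∂μ‖₊ : ℝ≥0∞) ^ p ∂P)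
      ≤ μ s ^ p * C := by
    have step1 : (∫⁻ ω, (‖(∫ u in s, X (t - u) ω ∂μ)
          - ∫ u in s, X (t - g u) ω ∂μ‖₊ : ℝ≥0∞) ^ p ∂P)
        ≤ ∫⁻ ω, (μ s ^ (p - 1) * ∫⁻ u in s, (h u ω) ^ p ∂μ) ∂P := by
      apply lintegral_mono
      intro ω
      refine le_trans (ENNReal.rpow_le_rpow (hA ω) hp0.le) ?_
      have := aux_jensen (μ.restrict s) hp (f := fun u => h u ω) (hh_u ω).aemeasurable
      rwa [Measure.restrict_apply_univ] at this
    have hmeas_prod : Measurable (fun q : Ω × ℝ => (h q.2 q.1) ^ p) :=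
      (hh_meas.comp measurable_swap).pow_const _
    have step2 : (∫⁻ ω, (μ s ^ (p - 1) * ∫⁻ u in s, (h u ω) ^ p ∂μ) ∂P)
        = μ s ^ (p - 1) * ∫⁻ u in s, (∫⁻ ω, (h u ω) ^ p ∂P) ∂μ := by
      rw [lintegral_const_mul' _ _ (ENNReal.rpow_ne_top_of_nonneg (by linarith) hmu_ne)]
      congr 1
      exact lintegral_lintegral_swap hmeas_prod.aemeasurable
    have step3 : (∫⁻ u in s, (∫⁻ ω, (h u ω) ^ p ∂P) ∂μ) ≤ C * μ s := by
      refine le_trans (setLIntegral_mono measurable_const hCbound) ?_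
      rw [setLIntegral_const]
    refine le_trans step1 (le_trans (le_of_eq step2) ?_)
    calc μ s ^ (p - 1) * ∫⁻ u in s, (∫⁻ ω, (h u ω) ^ p ∂P) ∂μ
        ≤ μ s ^ (p - 1) * (C * μ s) := mul_le_mul_right step3 _
      _ ≤ μ s ^ p * C := by
          by_cases hzero : μ s = 0
          · simp [hzero]
          · rw [show p = (p - 1) + 1 by ring, ENNReal.rpow_add _ _ hzero hmu_ne,
              ENNReal.rpow_one]
            ring_nf
            exact le_refl _
    done
  refine le_trans hchain ?_
  have hpow : μ s ^ p = ENNReal.ofReal ((μ s).toReal ^ p) := by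
    conv_lhs => rw [← ENNReal.ofReal_toReal hmu_ne]
    rw [← ENNReal.ofReal_rpow_of_nonneg ENNReal.toReal_nonneg hp0.le]
  have hrw : μ s ^ p * C = ENNReal.ofReal ((μ s).toReal ^ p
      * (K₁ * (n:ℝ) ^ (-p) + K₂ * ε ^ p * (n:ℝ) ^ (-(p / 2)))) := by
    rw [hC, hpow, ← ENNReal.ofReal_mul (Real.rpow_nonneg ENNReal.toReal_nonneg p)]
  rw [hrw]
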